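/- Let (G = (V₁, V₂, E), Σ, π) be a projection game, let ℓ ≥ 1 be an integer, and let (B, (C_x)_{x∈Σ}) be an (|Σ|, ℓ)-set system indexed by Σ. Fix an edge e = (u, v) ∈ E with u ∈ V₁, v ∈ V₂, and suppose a collection S of sets of the associated Set Cover instance covers {e} × B. Define L_u = {y ∈ Σ : S_{u,y} ∈ S} and L_v = {x ∈ Σ : S_{v,x} ∈ S}. If |L_u| + |L_v| ≤ ℓ, then there exist a ∈ L_u and b ∈ L_v with π_e(a) = b. -/
import Mathlib


/-- The sets of the Set Cover instance associated to a projection game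
`(G = (V₁, V₂, E), A, π)` and a family `(C_x)_{x ∈ A}` of subsets of `B`. -/
def projSet {V₁ V₂ A B : Type} (E : Set (V₁ × V₂)) (π : V₁ × V₂ → A → A)
    (C : A → Set B) : (V₁ ⊕ V₂) × A → Set ((V₁ × V₂) × B)
  | (Sum.inl u, y) => {p | p.1 ∈ E ∧ p.1.1 = u ∧ p.2 ∉ C (π p.1 y)}
  | (Sum.inr v, x) => {p | p.1 ∈ E ∧ p.1.2 = v ∧ p.2 ∈ C x}

/-- If `(B, (C_x))` is an `(|A|, ℓ)`-set system, a collection `S` of sets of the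
associated Set Cover instance covers `{e} × B` for an edge `e = (u,v)`, and the
label sets `L_u = {y : S_{u,y} ∈ S}`, `L_v = {x : S_{v,x} ∈ S}` satisfy
`|L_u| + |L_v| ≤ ℓ`, then some `a ∈ L_u`, `b ∈ L_v` satisfy `π_e(a) = b`. -/
theorem stmt_3 {V₁ V₂ A B : Type} [Fintype V₁] [Fintype V₂] [Fintype A] [Fintype B]
    [DecidableEq A]
    (E : Set (V₁ × V₂)) (π : V₁ × V₂ → A → A) (C : A → Set B)
    (ℓ : ℕ) (hℓ : 1 ≤ ℓ)
    -- `(B, (C_x)_{x ∈ A})` is an `(|A|, ℓ)`-set system: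
    (hsys : ∀ P N : Finset A, P.card + N.card ≤ ℓ →
      ((⋃ x ∈ P, C x) ∪ ⋃ x ∈ N, (C x)ᶜ) = (Set.univ : Set B) →
      ∃ x ∈ P, x ∈ N)
    (u : V₁) (v : V₂) (hE : (u, v) ∈ E)
    (S : Set ((V₁ ⊕ V₂) × A))
    (hcov : ({(u, v)} : Set (V₁ × V₂)) ×ˢ (Set.univ : Set B) ⊆
      ⋃ i ∈ S, projSet E π C i)
    (Lu Lv : Finset A)
    (hLu : ∀ y, y ∈ Lu ↔ (Sum.inl u, y) ∈ S)
    (hLv : ∀ x, x ∈ Lv ↔ (Sum.inr v, x) ∈ S)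
    (hsize : Lu.card + Lv.card ≤ ℓ) :
    ∃ a ∈ Lu, ∃ b ∈ Lv, π (u, v) a = b := by
  have hcup : ((⋃ x ∈ Lv, C x) ∪ ⋃ x ∈ Lu.image (π (u, v)), (C x)ᶜ) = (Set.univ : Set B) := by
    apply Set.eq_univ_of_forall
    intro b
    have hb : ((u, v), b) ∈ ⋃ i ∈ S, projSet E π C i :=
      hcov ⟨rfl, Set.mem_univ b⟩
    rcases Set.mem_iUnion₂.1 hb with ⟨i, hiS, hi⟩
    obtain ⟨w | w, y⟩ := i
    · rcases hi with ⟨-, hw, hby⟩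
      subst hw
      right
      exact Set.mem_iUnion₂.2 ⟨π (u, v) y, Finset.mem_image_of_mem _ ((hLu y).2 hiS), hby⟩
    · rcases hi with ⟨-, hw, hby⟩
      subst hw
      left
      exact Set.mem_iUnion₂.2 ⟨y, (hLv y).2 hiS, hby⟩
  have hcard : Lv.card + (Lu.image (π (u, v))).card ≤ ℓ := by
    calc Lv.card + (Lu.image (π (u, v))).card ≤ Lv.card + Lu.card :=
          Nat.add_le_add_left (Finset.card_image_le) _
      _ ≤ ℓ := by omega
  obtain ⟨x, hxP, hxN⟩ := hsys Lv (Lu.image (π (u, v))) hcard hcup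
  rcases Finset.mem_image.1 hxN with ⟨a, ha, hax⟩
  exact ⟨a, ha, x, hxP, hax⟩
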